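/- Let n : ℤ → ℝ be a finitely supported function, R ∈ ℕ, and for each r ∈ {1, …, R} let vˣᵣ, vʸᵣ, vᶻᵣ : ℤ → ℝ and Mʸᶻᵣ, Mˣᶻᵣ, Mˣʸᵣ : ℤ × ℤ → ℝ be arbitrary. Define the VM-decomposed tensor T(x, y, z) = ∑_{r=1}^{R} vˣᵣ(x)·Mʸᶻᵣ(y, z) + vʸᵣ(y)·Mˣᶻᵣ(x, z) + vᶻᵣ(z)·Mˣʸᵣ(x, y), the isotropic kernel N₃(s, t, w) = n(s)·n(t)·n(w), 1D convolution (n ∗ v)(x) = ∑_{s ∈ supp(n)} n(s)·v(x − s), 2D convolution ((n ⊗ n) ∗₂ M)(y, z) = ∑_{t ∈ supp(n)} ∑_{w ∈ supp(n)} n(t)·n(w)·M(y − t, z − w), and 3D convolution (N₃ ∗₃ T)(x, y, z) = ∑_{s ∈ supp(n)} ∑_{t ∈ supp(n)} ∑_{w ∈ supp(n)} n(s)·n(t)·n(w)·T(x − s, y − t, z − w). Then for all x, y, z ∈ ℤ: (N₃ ∗₃ T)(x, y, z) = ∑_{r=1}^{R} (n ∗ vˣᵣ)(x)·((n ⊗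 n) ∗₂ Mʸᶻᵣ)(y, z) + (n ∗ vʸᵣ)(y)·((n ⊗ n) ∗₂ Mˣᶻᵣ)(x, z) + (n ∗ vᶻᵣ)(z)·((n ⊗ n) ∗₂ Mˣʸᵣ)(x, y). -/
import Mathlib

lemma per_r (F : Finset ℤ) (n a : ℤ → ℝ) (b : ℤ → ℤ → ℝ)
    (f : ℤ → ℤ → ℤ → ℝ)
    (hf : ∀ s t w, f s t w = n s * n t * n w * (a s * b t w)) :
    (∑ s ∈ F, ∑ t ∈ F, ∑ w ∈ F, f s t w) =
      (∑ s ∈ F, n s * a s) * (∑ t ∈ F, ∑ w ∈ F, n t * n w * b t w) := by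
  simp only [hf]
  rw [Finset.sum_mul]
  refine Finset.sum_congr rfl fun s _ => ?_
  rw [Finset.mul_sum]
  refine Finset.sum_congr rfl fun t _ => ?_
  rw [Finset.mul_sum]
  exact Finset.sum_congr rfl fun w _ => by ring

theorem stmt_11 (n : ℤ → ℝ) (hn : (Function.support n).Finite) (R : ℕ)
    (vX vY vZ : Fin R → ℤ → ℝ) (MYZ MXZ MXY : Fin R → ℤ × ℤ → ℝ) (x y z : ℤ) :
    (∑ s ∈ hn.toFinset, ∑ t ∈ hn.toFinset, ∑ w ∈ hn.toFinset,
        n s * n t * n w *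
          (∑ r : Fin R,
            (vX r (x - s) * MYZ r (y - t, z - w) +
             vY r (y - t) * MXZ r (x - s, z - w) +
             vZ r (z - w) * MXY r (x - s, y - t)))) =
      ∑ r : Fin R,
        ((∑ s ∈ hn.toFinset, n s * vX r (x - s)) *
            (∑ t ∈ hn.toFinset, ∑ w ∈ hn.toFinset, n t * n w * MYZ r (y - t, z - w)) +
         (∑ t ∈ hn.toFinset, n t * vY r (y - t)) *
            (∑ s ∈ hn.toFinset, ∑ w ∈ hn.toFinset, n s * n w * MXZ r (x - s, z - w)) +
         (∑ w ∈ hn.toFinset, n w * vZ r (z - w)) *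
            (∑ s ∈ hn.toFinset, ∑ t ∈ hn.toFinset, n s * n t * MXY r (x - s, y - t))) := by
  set F := hn.toFinset
  conv_lhs => enter [2, s, 2, t, 2, w]; rw [Finset.mul_sum]
  conv_lhs => enter [2, s, 2, t]; rw [Finset.sum_comm]
  conv_lhs => enter [2, s]; rw [Finset.sum_comm]
  rw [Finset.sum_comm]
  refine Finset.sum_congr rfl fun r _ => ?_
  simp only [mul_add, Finset.sum_add_distrib]
  congr 1
  · congr 1
    · exact per_r F n (fun s => vX r (x - s)) (fun t w => MYZ r (y - t, z - w)) _
        (fun s t w => rfl)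
    · rw [Finset.sum_comm]
      exact per_r F n (fun t => vY r (y - t)) (fun s w => MXZ r (x - s, z - w)) _
        (fun t s w => by ring)
  · conv_lhs => enter [2, s]; rw [Finset.sum_comm]
    rw [Finset.sum_comm]
    exact per_r F n (fun w => vZ r (z - w)) (fun s t => MXY r (x - s, y - t)) _
      (fun w s t => by ring)
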